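/- Let E be a Riesz space and let p, q : ℕ → ℕ satisfy the deferred property. If x_n ↓^{D_{st_o}}_{p,q} 0 and y_n ↓^{D_{st_o}}_{p,q} 0, then (x_n + y_n) ↓^{D_{st_o}}_{p,q} 0. -/

import Mathlib

open Filter Topology

variable {E : Type*} [AddCommGroup E] [Lattice E]
  [CovariantClass E E (· + ·) (· ≤ ·)] [Module ℝ E] [PosSMulMono ℝ E]

/-- `p` and `q` satisfy the deferred property: `p n < q n` for all `n` and `q n → ∞`. -/
def DeferredProperty (p q : ℕ → ℕ) : Prop :=
  (∀ n, p n < q n) ∧ Tendsto q atTop atTop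

open Classical in
/-- The ratio `|{k ∈ K : p n < k ≤ q n}| / (q n - p n)`. -/
noncomputable def deferredRatio (p q : ℕ → ℕ) (K : Set ℕ) (n : ℕ) : ℝ :=
  (((Finset.Ioc (p n) (q n)).filter (fun k => k ∈ K)).card : ℝ) / ((q n : ℝ) - (p n : ℝ))

/-- The deferred density of `K ⊆ ℕ` is `a`. -/
def DeferredDensity (p q : ℕ → ℕ) (K : Set ℕ) (a : ℝ) : Prop :=
  Tendsto (deferredRatio p q K) atTop (nhds a)

/-- `z` is deferred statistical order decreasing to `0`: there is an (infinite) set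
`K = {k₁ < k₂ < ⋯}` of deferred density one along which `z` is decreasing with infimum `0`. -/
def DStatDecreasing (p q : ℕ → ℕ) (z : ℕ → E) : Prop :=
  ∃ K : Set ℕ, K.Infinite ∧ DeferredDensity p q K 1 ∧
    (∀ i ∈ K, ∀ j ∈ K, i ≤ j → z j ≤ z i) ∧ IsGLB (z '' K) 0

/-- `x` is deferred statistical order convergent to `l`. -/
def DStatOrderConv (p q : ℕ → ℕ) (x : ℕ → E) (l : E) : Prop :=
  ∃ z : ℕ → E, DStatDecreasing p q z ∧
    ∃ K : Set ℕ, K.Infinite ∧ DeferredDensity p q K 1 ∧ ∀ k ∈ K, |x k - l| ≤ z k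

open Classical in
lemma my_ratio_nonneg (p q : ℕ → ℕ) (hpq : DeferredProperty p q) (K : Set ℕ) (n : ℕ) :
    0 ≤ deferredRatio p q K n := by
  have h : (0:ℝ) < (q n : ℝ) - p n := by
    have := hpq.1 n
    have : (p n : ℝ) < q n := by exact_mod_cast this
    linarith
  exact div_nonneg (Nat.cast_nonneg _) h.le

open Classical in
lemma my_ratio_mono (p q : ℕ → ℕ) (hpq : DeferredProperty p q) (A B : Set ℕ) (hAB : A ⊆ B)
    (n : ℕ) : deferredRatio p q A n ≤ deferredRatio p q B n := by
  have h : (0:ℝ) < (q n : ℝ) - p n := by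
    have := hpq.1 n
    have : (p n : ℝ) < q n := by exact_mod_cast this
    linarith
  apply div_le_div_of_nonneg_right ?_ h.le
  exact_mod_cast Finset.card_le_card (by
      intro k hk
      simp only [Finset.mem_filter] at hk ⊢
      exact ⟨hk.1, hAB hk.2⟩)

open Classical in
lemma my_density_inter (p q : ℕ → ℕ) (hpq : DeferredProperty p q) (A B : Set ℕ)
    (hA : DeferredDensity p q A 1) (hB : DeferredDensity p q B 1) :
    DeferredDensity p q (A ∩ B) 1 := by
  have hd : ∀ n, (0:ℝ) < (q n : ℝ) - p n := by
    intro n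
    have := hpq.1 n
    have : (p n : ℝ) < q n := by exact_mod_cast this
    linarith
  have hlow : ∀ n, deferredRatio p q A n + deferredRatio p q B n - 1 ≤
      deferredRatio p q (A ∩ B) n := by
    intro n
    set S := Finset.Ioc (p n) (q n) with hS
    set a := S.filter (fun k => k ∈ A) with ha
    set b := S.filter (fun k => k ∈ B) with hb
    set i := S.filter (fun k => k ∈ A ∩ B) with hi
    have hab : a ∩ b = i := by
      ext k
      simp only [Finset.mem_inter, Finset.mem_filter, Set.mem_inter_iff, ha, hb, hi]
      tauto
    have hcard : a.card + b.card ≤ i.card + S.card := by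
      have h1 : (a ∪ b).card + (a ∩ b).card = a.card + b.card :=
        Finset.card_union_add_card_inter a b
      have h2 : (a ∪ b).card ≤ S.card :=
        Finset.card_le_card (by
          intro k hk
          rcases Finset.mem_union.1 hk with h | h
          · exact (Finset.mem_filter.1 h).1
          · exact (Finset.mem_filter.1 h).1)
      rw [hab] at h1
      omega
    have hScard : (S.card : ℝ) = (q n : ℝ) - p n := by
      rw [hS, Nat.card_Ioc]
      exact_mod_cast Nat.cast_sub (hpq.1 n).le
    have hcardR : (a.card : ℝ) + b.card ≤ (i.card : ℝ) + ((q n : ℝ) - p n) := by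
      rw [← hScard]; exact_mod_cast hcard
    have e1 : deferredRatio p q A n = (a.card : ℝ) / ((q n : ℝ) - p n) := rfl
    have e2 : deferredRatio p q B n = (b.card : ℝ) / ((q n : ℝ) - p n) := rfl
    have e3 : deferredRatio p q (A ∩ B) n = (i.card : ℝ) / ((q n : ℝ) - p n) := by
      simp only [deferredRatio]
      refine congrArg (fun m : ℝ => m / ((q n : ℝ) - p n)) ?_
      refine congrArg (fun m : ℕ => (m : ℝ)) ?_
      refine congrArg Finset.card ?_
      ext k
      simp [Finset.mem_filter, hi, hS]
    rw [e1, e2, e3, ← add_div, sub_le_iff_le_add]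
    have e4 : (i.card : ℝ) / ((q n : ℝ) - p n) + 1 =
        ((i.card : ℝ) + ((q n : ℝ) - p n)) / ((q n : ℝ) - p n) := by
      have := (hd n).ne'
      field_simp
    rw [e4]
    exact div_le_div_of_nonneg_right hcardR (hd n).le
  have hup : ∀ n, deferredRatio p q (A ∩ B) n ≤ deferredRatio p q A n :=
    fun n => my_ratio_mono p q hpq _ _ Set.inter_subset_left n
  have h1 : Tendsto (fun n => deferredRatio p q A n + deferredRatio p q B n - 1)
      atTop (nhds 1) := by
    have := (hA.add hB).sub_const 1
    simpa using this
  exact tendsto_of_tendsto_of_tendsto_of_le_of_le h1 hA hlow hup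

open Classical in
lemma my_infinite_of_density_one (p q : ℕ → ℕ) (hpq : DeferredProperty p q)
    (K : Set ℕ) (hK : DeferredDensity p q K 1) : K.Infinite := by
  by_contra h
  rw [Set.not_infinite] at h
  obtain ⟨M, hM⟩ : ∃ M, ∀ k ∈ K, k ≤ M :=
    ⟨h.toFinset.sup id, fun k hk => Finset.le_sup (f := id) (h.mem_toFinset.2 hk)⟩
  have h0 : Tendsto (deferredRatio p q K) atTop (nhds 0) := by
    apply squeeze_zero' (g := fun n => (M : ℝ) / ((q n : ℝ) - M))
    · exact Eventually.of_forall fun n => my_ratio_nonneg p q hpq K n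
    · have hq : ∀ᶠ n in atTop, M + 1 ≤ q n := hpq.2.eventually_ge_atTop (M + 1)
      filter_upwards [hq] with n hn
      have hdM : (0:ℝ) < (q n : ℝ) - M := by
        have : (M : ℝ) + 1 ≤ q n := by exact_mod_cast hn
        linarith
      by_cases hp : M ≤ p n
      · have : (Finset.Ioc (p n) (q n)).filter (fun k => k ∈ K) = ∅ := by
          apply Finset.filter_eq_empty_iff.2
          intro k hk hkK
          have := hM k hkK
          have := (Finset.mem_Ioc.1 hk).1
          omega
        simp [deferredRatio, this]
        positivity
      · push_neg at hp
        have hd : (0:ℝ) < (q n : ℝ) - p n := by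
          have := hpq.1 n
          have : (p n : ℝ) < q n := by exact_mod_cast this
          linarith
        have hnum : ((Finset.Ioc (p n) (q n)).filter (fun k => k ∈ K)).card ≤ M := by
          calc ((Finset.Ioc (p n) (q n)).filter (fun k => k ∈ K)).card
              ≤ (Finset.Ioc (p n) M).card := Finset.card_le_card (by
                intro k hk
                have hk' := Finset.mem_filter.1 hk
                have := (Finset.mem_Ioc.1 hk'.1).1
                have := hM k hk'.2
                simp only [Finset.mem_Ioc]
                omega)
            _ = M - p n := Nat.card_Ioc _ _
            _ ≤ M := Nat.sub_le _ _
        have hden : (q n : ℝ) - M ≤ (q n : ℝ) - p n := by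
          have : (p n : ℝ) ≤ M := by exact_mod_cast hp.le
          linarith
        calc deferredRatio p q K n
            ≤ (M : ℝ) / ((q n : ℝ) - p n) :=
              div_le_div_of_nonneg_right (by exact_mod_cast hnum) hd.le
          _ ≤ (M : ℝ) / ((q n : ℝ) - M) :=
              div_le_div_of_nonneg_left (by positivity) hdM hden
    · apply Tendsto.div_atTop tendsto_const_nhds
      apply tendsto_atTop_add_const_right
      exact tendsto_natCast_atTop_atTop.comp hpq.2
  exact absurd (tendsto_nhds_unique hK h0) one_ne_zero

lemma my_glb_inter (x : ℕ → E) (K K' : Set ℕ) (hinf : (K ∩ K').Infinite)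
    (hmono : ∀ i ∈ K, ∀ j ∈ K, i ≤ j → x j ≤ x i) (hglb : IsGLB (x '' K) 0) :
    IsGLB (x '' (K ∩ K')) 0 := by
  constructor
  · intro v hv
    exact hglb.1 (Set.image_mono Set.inter_subset_left hv)
  · intro b hb
    apply hglb.2
    rintro v ⟨k, hk, rfl⟩
    obtain ⟨j, hj, hjk⟩ := hinf.exists_gt k
    have h1 : b ≤ x j := hb ⟨j, hj, rfl⟩
    exact h1.trans (hmono k hk j hj.1 hjk.le)

lemma my_glb_add (x y : ℕ → E) (K : Set ℕ)
    (hxm : ∀ i ∈ K, ∀ j ∈ K, i ≤ j → x j ≤ x i)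
    (hym : ∀ i ∈ K, ∀ j ∈ K, i ≤ j → y j ≤ y i)
    (hxg : IsGLB (x '' K) 0) (hyg : IsGLB (y '' K) 0) :
    IsGLB ((fun n => x n + y n) '' K) 0 := by
  constructor
  · rintro v ⟨k, hk, rfl⟩
    have h1 : (0:E) ≤ x k := hxg.1 ⟨k, hk, rfl⟩
    have h2 : (0:E) ≤ y k := hyg.1 ⟨k, hk, rfl⟩
    simpa using add_le_add h1 h2
  · intro b hb
    have key : ∀ i ∈ K, ∀ j ∈ K, b ≤ x i + y j := by
      intro i hi j hj
      rcases le_total i j with h | h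
      · have hm : b ≤ x j + y j := hb ⟨j, hj, rfl⟩
        exact hm.trans (add_le_add_left (hxm i hi j hj h) _)
      · have hm : b ≤ x i + y i := hb ⟨i, hi, rfl⟩
        exact hm.trans (add_le_add_right (hym j hj i hi h) _)
    have hylb : ∀ j ∈ K, b ≤ y j := by
      intro j hj
      have hxlb : b - y j ∈ lowerBounds (x '' K) := by
        rintro v ⟨i, hi, rfl⟩
        exact sub_le_iff_le_add.2 (key i hi j hj)
      exact sub_nonpos.1 (hxg.2 hxlb)
    have : b ∈ lowerBounds (y '' K) := by
      rintro v ⟨j, hj, rfl⟩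
      exact hylb j hj
    exact hyg.2 this

theorem stmt1 (p q : ℕ → ℕ) (hpq : DeferredProperty p q) (x y : ℕ → E)
    (hx : DStatDecreasing p q x) (hy : DStatDecreasing p q y) :
    DStatDecreasing p q (fun n => x n + y n) := by
  obtain ⟨K₁, hK₁inf, hK₁d, hK₁mono, hK₁glb⟩ := hx
  obtain ⟨K₂, hK₂inf, hK₂d, hK₂mono, hK₂glb⟩ := hy
  have hdens : DeferredDensity p q (K₁ ∩ K₂) 1 := my_density_inter p q hpq _ _ hK₁d hK₂d
  have hinf : (K₁ ∩ K₂).Infinite := my_infinite_of_density_one p q hpq _ hdens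
  refine ⟨K₁ ∩ K₂, hinf, hdens, ?_, ?_⟩
  · intro i hi j hj hij
    exact add_le_add (hK₁mono i hi.1 j hj.1 hij) (hK₂mono i hi.2 j hj.2 hij)
  · have hxg : IsGLB (x '' (K₁ ∩ K₂)) 0 := my_glb_inter x K₁ K₂ hinf hK₁mono hK₁glb
    have hyg : IsGLB (y '' (K₁ ∩ K₂)) 0 := by
      rw [Set.inter_comm] at hinf ⊢
      exact my_glb_inter y K₂ K₁ hinf hK₂mono hK₂glb
    exact my_glb_add x y (K₁ ∩ K₂)
      (fun i hi j hj h => hK₁mono i hi.1 j hj.1 h)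
      (fun i hi j hj h => hK₂mono i hi.2 j hj.2 h)
      hxg hyg
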